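/- Let φ : ℝ⁵ → ℝ be C³, suppose that the function ℓ₁₁ := i·( L₁(Ā₁) − L̄₁(A₁) ) vanishes nowhere, and define the operator T f := ℓ₁₁·f_u. Then for j ∈ {1, 2} and every C² function f : ℝ⁵ → ℂ: [T, L_j] f = −P_j · (T f) and [T, L̄_j] f = −conj(P_j) · (T f), where P_j := ( (ℓ₁₁)_{z_j} + A_j·(ℓ₁₁)_u − ℓ₁₁·(A_j)_u ) / ℓ₁₁. (These are the bracket relations [T, L_j] = −P_j·T and [T, L̄_j] = −P̄_j·T of the paper's Summary for General Class IV₁.) -/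

import Mathlib

noncomputable section
open Complex ComplexConjugate

/-- Points of `ℝ⁵`, with coordinates `(x₁, y₁, x₂, y₂, u)`, `z₁ = x₁ + i y₁`,
`z₂ = x₂ + i y₂`. -/
abbrev V5 := Fin 5 → ℝ

/-- Partial derivative in the `j`-th coordinate direction. -/
def pd (j : Fin 5) (f : V5 → ℂ) : V5 → ℂ := fun p => fderiv ℝ f p (Pi.single j 1)

/-- Wirtinger derivative `f_{z₁} := (f_{x₁} − i f_{y₁})/2`. -/
def wz1 (f : V5 → ℂ) : V5 → ℂ := fun p => (pd 0 f p - I * pd 1 f p) / 2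

/-- Wirtinger derivative `f_{z̄₁} := (f_{x₁} + i f_{y₁})/2`. -/
def wzb1 (f : V5 → ℂ) : V5 → ℂ := fun p => (pd 0 f p + I * pd 1 f p) / 2

/-- Wirtinger derivative `f_{z₂} := (f_{x₂} − i f_{y₂})/2`. -/
def wz2 (f : V5 → ℂ) : V5 → ℂ := fun p => (pd 2 f p - I * pd 3 f p) / 2

/-- Wirtinger derivative `f_{z̄₂} := (f_{x₂} + i f_{y₂})/2`. -/
def wzb2 (f : V5 → ℂ) : V5 → ℂ := fun p => (pd 2 f p + I * pd 3 f p) / 2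

/-- Partial derivative `f_u`. -/
def du (f : V5 → ℂ) : V5 → ℂ := pd 4 f

/-- Complexification of a real-valued function. -/
def cl (φ : V5 → ℝ) : V5 → ℂ := fun p => (φ p : ℂ)

variable (φ : V5 → ℝ)

/-- The coefficient `A₁ := −φ_{z₁}/(i + φ_u)`. -/
def A1 : V5 → ℂ := fun p => -(wz1 (cl φ) p) / (I + du (cl φ) p)

/-- The coefficient `A₂ := −φ_{z₂}/(i + φ_u)`. -/
def A2 : V5 → ℂ := fun p => -(wz2 (cl φ) p) / (I + du (cl φ) p)

/-- The operator `L₁ f := f_{z₁} + A₁ f_u`. -/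
def L1 (f : V5 → ℂ) : V5 → ℂ := fun p => wz1 f p + A1 φ p * du f p

/-- The operator `L₂ f := f_{z₂} + A₂ f_u`. -/
def L2 (f : V5 → ℂ) : V5 → ℂ := fun p => wz2 f p + A2 φ p * du f p

/-- The conjugate operator `L̄₁ f := f_{z̄₁} + Ā₁ f_u`. -/
def Lb1 (f : V5 → ℂ) : V5 → ℂ := fun p => wzb1 f p + conj (A1 φ p) * du f p

/-- The conjugate operator `L̄₂ f := f_{z̄₂} + Ā₂ f_u`. -/
def Lb2 (f : V5 → ℂ) : V5 → ℂ := fun p => wzb2 f p + conj (A2 φ p) * du f p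

/-- The coefficient `A_j`, `j = 1, 2` (indexed by `Fin 2`). -/
def Aj (j : Fin 2) : V5 → ℂ := if j = 0 then A1 φ else A2 φ

/-- The Wirtinger derivative `f_{z_j}`, `j = 1, 2` (indexed by `Fin 2`). -/
def wzj (j : Fin 2) : (V5 → ℂ) → V5 → ℂ := if j = 0 then wz1 else wz2

/-- The operator `L_j`, `j = 1, 2` (indexed by `Fin 2`). -/
def Lj (j : Fin 2) : (V5 → ℂ) → V5 → ℂ := if j = 0 then L1 φ else L2 φ

/-- The conjugate operator `L̄_j`, `j = 1, 2` (indexed by `Fin 2`). -/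
def Lbj (j : Fin 2) : (V5 → ℂ) → V5 → ℂ := if j = 0 then Lb1 φ else Lb2 φ

/-- The function `ℓ_{jk} := i·( L_k(Ā_j) − L̄_j(A_k) )`. -/
def ell (j k : Fin 2) : V5 → ℂ := fun p =>
  I * (Lj φ k (fun q => conj (Aj φ j q)) p - Lbj φ j (Aj φ k) p)

/-- The operator `T f := ℓ₁₁·f_u`. -/
def Tof (f : V5 → ℂ) : V5 → ℂ := fun p => ell φ 0 0 p * du f p

/-- The coefficient `P_j := ( (ℓ₁₁)_{z_j} + A_j·(ℓ₁₁)_u − ℓ₁₁·(A_j)_u ) / ℓ₁₁`. -/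
def Pj (j : Fin 2) : V5 → ℂ := fun p =>
  (wzj j (ell φ 0 0) p + Aj φ j p * du (ell φ 0 0) p - ell φ 0 0 p * du (Aj φ j) p)
    / ell φ 0 0 p

/-! ### Auxiliary lemmas -/

section Aux

variable {f g l B : V5 → ℂ} {p : V5} {m a b : Fin 5} {c : ℂ}

lemma pd_add' (m : Fin 5) (hf : DifferentiableAt ℝ f p) (hg : DifferentiableAt ℝ g p) :
    pd m (fun q => f q + g q) p = pd m f p + pd m g p := by
  simp [pd, fderiv_fun_add hf hg]

lemma pd_mul' (m : Fin 5) (hf : DifferentiableAt ℝ f p) (hg : DifferentiableAt ℝ g p) :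
    pd m (fun q => f q * g q) p = pd m f p * g p + f p * pd m g p := by
  simp [pd, fderiv_fun_mul hf hg]; ring

lemma pd_const_mul' (m : Fin 5) (c : ℂ) (hf : DifferentiableAt ℝ f p) :
    pd m (fun q => c * f q) p = c * pd m f p := by
  simp [pd, fderiv_const_mul hf]

lemma pd_conj' (m : Fin 5) (hf : DifferentiableAt ℝ f p) :
    pd m (fun q => conj (f q)) p = conj (pd m f p) := by
  have h : fderiv ℝ (fun q => conj (f q)) p
      = Complex.conjCLE.toContinuousLinearMap.comp (fderiv ℝ f p) :=
    (Complex.conjCLE.toContinuousLinearMap.hasFDerivAt.comp p hf.hasFDerivAt).fderiv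
  simp only [pd, h, ContinuousLinearMap.coe_comp', Function.comp_apply]
  rfl

lemma contDiff_pd (m : Fin 5) {n k : WithTop ℕ∞} (hf : ContDiff ℝ n f) (h : k + 1 ≤ n) :
    ContDiff ℝ k (pd m f) :=
  (hf.fderiv_right h).clm_apply contDiff_const

lemma pd_pd (hf : ContDiff ℝ 2 f) (m k : Fin 5) (p : V5) :
    pd m (pd k f) p = fderiv ℝ (fderiv ℝ f) p (Pi.single m 1) (Pi.single k 1) := by
  have hd : DifferentiableAt ℝ (fderiv ℝ f) p :=
    (((hf.fderiv_right (show (1:WithTop ℕ∞) + 1 ≤ 2 by norm_num)).differentiable one_ne_zero) p)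
  have h := ((ContinuousLinearMap.apply ℝ ℂ ((Pi.single k 1 : V5))).hasFDerivAt.comp p
    hd.hasFDerivAt).fderiv
  show fderiv ℝ (pd k f) p (Pi.single m 1) = _
  rw [show pd k f = (ContinuousLinearMap.apply ℝ ℂ ((Pi.single k 1 : V5))) ∘ fderiv ℝ f
    from rfl, h]
  rfl

lemma pd_comm (hf : ContDiff ℝ 2 f) (m k : Fin 5) (p : V5) :
    pd m (pd k f) p = pd k (pd m f) p := by
  rw [pd_pd hf, pd_pd hf]
  exact (hf.contDiffAt.isSymmSndFDerivAt (by simp [minSmoothness_of_isRCLikeNormedField])) _ _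

/-- Generic Wirtinger-type combination `(f_{x_a} + c f_{x_b})/2`. -/
def W (a b : Fin 5) (c : ℂ) (f : V5 → ℂ) : V5 → ℂ := fun p => (pd a f p + c * pd b f p) / 2

lemma wz1_eq (f : V5 → ℂ) : wz1 f = W 0 1 (-I) f := by funext p; simp [wz1, W]; ring
lemma wzb1_eq (f : V5 → ℂ) : wzb1 f = W 0 1 I f := by funext p; simp [wzb1, W]
lemma wz2_eq (f : V5 → ℂ) : wz2 f = W 2 3 (-I) f := by funext p; simp [wz2, W]; ring
lemma wzb2_eq (f : V5 → ℂ) : wzb2 f = W 2 3 I f := by funext p; simp [wzb2, W]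

lemma contDiff_W {n k : WithTop ℕ∞} (hf : ContDiff ℝ n f) (h : k + 1 ≤ n) :
    ContDiff ℝ k (W a b c f) :=
  (((contDiff_pd a hf h).add ((contDiff_const (c := c)).mul (contDiff_pd b hf h))).div_const 2)

lemma W_eq_comb : W a b c f = fun p => (1/2 : ℂ) * pd a f p + (c/2) * pd b f p := by
  funext p; simp [W]; ring

lemma du_W (hf : ContDiff ℝ 2 f) (p : V5) : du (W a b c f) p = W a b c (du f) p := by
  have h1 : (1 : WithTop ℕ∞) + 1 ≤ 2 := by norm_num
  have ha : DifferentiableAt ℝ (pd a f) p :=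
    (((contDiff_pd a hf h1).differentiable one_ne_zero) p)
  have hb : DifferentiableAt ℝ (pd b f) p :=
    (((contDiff_pd b hf h1).differentiable one_ne_zero) p)
  show pd 4 (W a b c f) p = _
  rw [W_eq_comb]
  rw [pd_add' 4 (ha.const_mul _) (hb.const_mul _), pd_const_mul' 4 _ ha, pd_const_mul' 4 _ hb]
  rw [pd_comm hf 4 a, pd_comm hf 4 b]
  simp [W, du]; ring

lemma W_mul (hl : DifferentiableAt ℝ l p) (hg : DifferentiableAt ℝ g p) :
    W a b c (fun q => l q * g q) p = W a b c l p * g p + l p * W a b c g p := by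
  simp only [W, pd_mul' a hl hg, pd_mul' b hl hg]; ring

lemma du_mul (hl : DifferentiableAt ℝ l p) (hg : DifferentiableAt ℝ g p) :
    du (fun q => l q * g q) p = du l p * g p + l p * du g p :=
  pd_mul' 4 hl hg

/-- The key bracket computation for a generic operator `X f = W f + B f_u` and `T f = l f_u`. -/
lemma key_bracket (a b : Fin 5) (c : ℂ) (B l : V5 → ℂ)
    (hB : DifferentiableAt ℝ B p) (hl : DifferentiableAt ℝ l p)
    (hf : ContDiff ℝ 2 f) :
    l p * du (fun q => W a b c f q + B q * du f q) p
      - (W a b c (fun q => l q * du f q) p + B p * du (fun q => l q * du f q) p)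
    = (l p * du B p - W a b c l p - B p * du l p) * du f p := by
  have h1 : (1 : WithTop ℕ∞) + 1 ≤ 2 := by norm_num
  have hdf : DifferentiableAt ℝ (du f) p :=
    (((contDiff_pd 4 hf h1).differentiable one_ne_zero) p)
  have hWf : DifferentiableAt ℝ (W a b c f) p :=
    (((contDiff_W hf h1).differentiable one_ne_zero) p)
  have e1 : du (fun q => W a b c f q + B q * du f q) p
      = W a b c (du f) p + (du B p * du f p + B p * du (du f) p) := by
    show pd 4 _ p = _
    rw [pd_add' (g := fun q => B q * du f q) 4 hWf (hB.mul hdf), pd_mul' 4 hB hdf]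
    rw [show pd 4 (W a b c f) p = W a b c (du f) p from du_W hf p]
    rfl
  have e2 : W a b c (fun q => l q * du f q) p
      = W a b c l p * du f p + l p * W a b c (du f) p := W_mul hl hdf
  have e3 : du (fun q => l q * du f q) p = du l p * du f p + l p * du (du f) p :=
    du_mul hl hdf
  rw [e1, e2, e3]; ring

lemma conj_W (hf : DifferentiableAt ℝ f p) :
    conj (W a b c f p) = W a b (conj c) (fun q => conj (f q)) p := by
  simp only [W, map_div₀, map_add, map_mul, map_ofNat, pd_conj' a hf, pd_conj' b hf]

end Aux

section Phi

variable {φ : V5 → ℝ}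

lemma contDiff_cl (hφ : ContDiff ℝ 3 φ) : ContDiff ℝ 3 (cl φ) :=
  Complex.ofRealCLM.contDiff.comp hφ

lemma den_ne (hφ : ContDiff ℝ 3 φ) (p : V5) : I + du (cl φ) p ≠ 0 := by
  have hderiv : fderiv ℝ (cl φ) p = Complex.ofRealCLM.comp (fderiv ℝ φ p) :=
    (Complex.ofRealCLM.hasFDerivAt.comp p
      ((hφ.differentiable (by norm_num)) p).hasFDerivAt).fderiv
  have : du (cl φ) p = ((fderiv ℝ φ p (Pi.single 4 1) : ℝ) : ℂ) := by
    simp [du, pd, hderiv]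
  intro h
  have him := congrArg Complex.im h
  rw [this] at him
  simp at him

lemma contDiff_A1 (hφ : ContDiff ℝ 3 φ) : ContDiff ℝ 2 (A1 φ) := by
  have h23 : (2 : WithTop ℕ∞) + 1 ≤ 3 := by norm_num
  have hcl := contDiff_cl hφ
  have h1 : ContDiff ℝ 2 (wz1 (cl φ)) := by rw [wz1_eq]; exact contDiff_W hcl h23
  have h2 : ContDiff ℝ 2 (fun p => I + du (cl φ) p) :=
    contDiff_const.add (contDiff_pd 4 hcl h23)
  have hA : A1 φ = fun p => -(wz1 (cl φ) p) * (I + du (cl φ) p)⁻¹ := by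
    funext p
    show -(wz1 (cl φ) p) / (I + du (cl φ) p) = _
    rw [div_eq_mul_inv]
  rw [hA]
  exact (h1.neg).mul (h2.inv (den_ne hφ))

lemma contDiff_A2 (hφ : ContDiff ℝ 3 φ) : ContDiff ℝ 2 (A2 φ) := by
  have h23 : (2 : WithTop ℕ∞) + 1 ≤ 3 := by norm_num
  have hcl := contDiff_cl hφ
  have h1 : ContDiff ℝ 2 (wz2 (cl φ)) := by rw [wz2_eq]; exact contDiff_W hcl h23
  have h2 : ContDiff ℝ 2 (fun p => I + du (cl φ) p) :=
    contDiff_const.add (contDiff_pd 4 hcl h23)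
  have hA : A2 φ = fun p => -(wz2 (cl φ) p) * (I + du (cl φ) p)⁻¹ := by
    funext p
    show -(wz2 (cl φ) p) / (I + du (cl φ) p) = _
    rw [div_eq_mul_inv]
  rw [hA]
  exact (h1.neg).mul (h2.inv (den_ne hφ))

lemma contDiff_conj {n : WithTop ℕ∞} {g : V5 → ℂ} (hg : ContDiff ℝ n g) :
    ContDiff ℝ n (fun q => conj (g q)) :=
  Complex.conjCLE.toContinuousLinearMap.contDiff.comp hg

lemma ell00_eq :
    ell φ 0 0 = fun p =>
      I * ((W 0 1 (-I) (fun q => conj (A1 φ q)) p + A1 φ p * du (fun q => conj (A1 φ q)) p)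
        - (W 0 1 I (A1 φ) p + conj (A1 φ p) * du (A1 φ) p)) := by
  funext p
  show I * ((wz1 (fun q => conj (A1 φ q)) p + A1 φ p * du (fun q => conj (A1 φ q)) p)
    - (wzb1 (A1 φ) p + conj (A1 φ p) * du (A1 φ) p)) = _
  rw [wz1_eq, wzb1_eq]

lemma contDiff_ell (hφ : ContDiff ℝ 3 φ) : ContDiff ℝ 1 (ell φ 0 0) := by
  have h12 : (1 : WithTop ℕ∞) + 1 ≤ 2 := by norm_num
  have hA1 := contDiff_A1 hφ
  have hA1c : ContDiff ℝ 2 (fun q => conj (A1 φ q)) := contDiff_conj hA1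
  rw [ell00_eq]
  exact contDiff_const.mul
    (((contDiff_W hA1c h12).add ((hA1.of_le (by norm_num)).mul (contDiff_pd 4 hA1c h12))).sub
      ((contDiff_W hA1 h12).add ((contDiff_conj (hA1.of_le (by norm_num))).mul
        (contDiff_pd 4 hA1 h12))))

lemma ell_real (hφ : ContDiff ℝ 3 φ) (p : V5) : conj (ell φ 0 0 p) = ell φ 0 0 p := by
  have hA1 := contDiff_A1 hφ
  have hA1p : DifferentiableAt ℝ (A1 φ) p :=
    (((hA1.differentiable (by norm_num)) p))
  have hA1cp : DifferentiableAt ℝ (fun q => conj (A1 φ q)) p :=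
    ((((contDiff_conj hA1).differentiable (by norm_num)) p))
  have hcc : (fun q => conj (conj (A1 φ q))) = A1 φ := by
    funext q; exact Complex.conj_conj _
  have hdu1 : conj (du (fun q => conj (A1 φ q)) p) = du (A1 φ) p := by
    rw [show du (fun q => conj (A1 φ q)) p = conj (du (A1 φ) p) from pd_conj' 4 hA1p,
      Complex.conj_conj]
  have hdu2 : conj (du (A1 φ) p) = du (fun q => conj (A1 φ q)) p := (pd_conj' 4 hA1p).symm
  rw [ell00_eq]
  simp only [map_mul, map_sub, map_add]
  rw [conj_W hA1cp, conj_W hA1p, hdu1, hdu2]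
  simp only [Complex.conj_I, map_neg, neg_neg, Complex.conj_conj, hcc]
  ring

lemma pd_ell_real (hφ : ContDiff ℝ 3 φ) (m : Fin 5) (p : V5) :
    conj (pd m (ell φ 0 0) p) = pd m (ell φ 0 0) p := by
  have hd : DifferentiableAt ℝ (ell φ 0 0) p :=
    (((contDiff_ell hφ).differentiable one_ne_zero) p)
  rw [← pd_conj' m hd]
  congr 1
  funext q
  exact ell_real hφ q

lemma conj_W_ell (hφ : ContDiff ℝ 3 φ) (a b : Fin 5) (c : ℂ) (p : V5) :
    conj (W a b c (ell φ 0 0) p) = W a b (conj c) (ell φ 0 0) p := by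
  simp only [W, map_div₀, map_add, map_mul, map_ofNat, pd_ell_real hφ]

end Phi

lemma abstract_bracket {f : V5 → ℂ} {p : V5} (a b : Fin 5) (c : ℂ) (B l : V5 → ℂ)
    (hB : DifferentiableAt ℝ B p) (hl : DifferentiableAt ℝ l p) (hl0 : l p ≠ 0)
    (hf : ContDiff ℝ 2 f) :
    l p * du (fun q => W a b c f q + B q * du f q) p
      - (W a b c (fun q => l q * du f q) p + B p * du (fun q => l q * du f q) p)
    = -((W a b c l p + B p * du l p - l p * du B p) / l p) * (l p * du f p) := by
  rw [key_bracket a b c B l hB hl hf]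
  field_simp
  ring

/-- The bracket relations `[T, L_j] = −P_j·T` and `[T, L̄_j] = −P̄_j·T` of the paper's
Summary for General Class IV₁. -/
theorem class_IV₁_brackets (hφ : ContDiff ℝ 3 φ) (hℓ : ∀ p, ell φ 0 0 p ≠ 0)
    (j : Fin 2) :
    ∀ f : V5 → ℂ, ContDiff ℝ 2 f → ∀ p,
      (Tof φ (Lj φ j f) p - Lj φ j (Tof φ f) p = -(Pj φ j p) * Tof φ f p) ∧
      (Tof φ (Lbj φ j f) p - Lbj φ j (Tof φ f) p = -(conj (Pj φ j p)) * Tof φ f p) := by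
  intro f hf p
  have hℓC := contDiff_ell hφ
  have hℓp : DifferentiableAt ℝ (ell φ 0 0) p :=
    ((hℓC.differentiable one_ne_zero) p)
  have hA1 := contDiff_A1 hφ
  have hA2 := contDiff_A2 hφ
  have hA1p : DifferentiableAt ℝ (A1 φ) p :=
    ((hA1.differentiable (by norm_num)) p)
  have hA2p : DifferentiableAt ℝ (A2 φ) p :=
    ((hA2.differentiable (by norm_num)) p)
  have hA1cp : DifferentiableAt ℝ (fun q => conj (A1 φ q)) p :=
    (((contDiff_conj hA1).differentiable (by norm_num)) p)
  have hA2cp : DifferentiableAt ℝ (fun q => conj (A2 φ q)) p :=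
    (((contDiff_conj hA2).differentiable (by norm_num)) p)
  have hTof : Tof φ f = fun q => ell φ 0 0 q * du f q := rfl
  have hduA1c : conj (du (A1 φ) p) = du (fun q => conj (A1 φ q)) p :=
    (pd_conj' 4 hA1p).symm
  have hduA2c : conj (du (A2 φ) p) = du (fun q => conj (A2 φ q)) p :=
    (pd_conj' 4 hA2p).symm
  have hduell : conj (du (ell φ 0 0) p) = du (ell φ 0 0) p := pd_ell_real hφ 4 p
  fin_cases j
  · -- j = 0
    have e4 : Pj φ 0 p = (W 0 1 (-I) (ell φ 0 0) p + A1 φ p * du (ell φ 0 0) p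
        - ell φ 0 0 p * du (A1 φ) p) / ell φ 0 0 p := by
      show (wz1 (ell φ 0 0) p + A1 φ p * du (ell φ 0 0) p
        - ell φ 0 0 p * du (A1 φ) p) / ell φ 0 0 p = _
      rw [wz1_eq]
    constructor
    · have e1 : Lj φ 0 f = (fun q => W 0 1 (-I) f q + A1 φ q * du f q) := by
        funext q; show wz1 f q + A1 φ q * du f q = _; rw [wz1_eq]
      have e3 : Lj φ 0 (Tof φ f) p
          = W 0 1 (-I) (fun q => ell φ 0 0 q * du f q) p
            + A1 φ p * du (fun q => ell φ 0 0 q * du f q) p := by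
        show wz1 (Tof φ f) p + A1 φ p * du (Tof φ f) p = _
        rw [wz1_eq, hTof]
      show Tof φ (Lj φ 0 f) p - Lj φ 0 (Tof φ f) p = -(Pj φ 0 p) * Tof φ f p
      calc Tof φ (Lj φ 0 f) p - Lj φ 0 (Tof φ f) p
          = ell φ 0 0 p * du (fun q => W 0 1 (-I) f q + A1 φ q * du f q) p
            - (W 0 1 (-I) (fun q => ell φ 0 0 q * du f q) p
              + A1 φ p * du (fun q => ell φ 0 0 q * du f q) p) := by
            rw [show Tof φ (Lj φ 0 f) p = ell φ 0 0 p * du (Lj φ 0 f) p from rfl, e1, e3]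
        _ = -((W 0 1 (-I) (ell φ 0 0) p + A1 φ p * du (ell φ 0 0) p
              - ell φ 0 0 p * du (A1 φ) p) / ell φ 0 0 p) * (ell φ 0 0 p * du f p) :=
            abstract_bracket 0 1 (-I) (A1 φ) (ell φ 0 0) hA1p hℓp (hℓ p) hf
        _ = -(Pj φ 0 p) * Tof φ f p := by rw [e4]; rfl
    · have e4c : conj (Pj φ 0 p) = (W 0 1 I (ell φ 0 0) p
          + conj (A1 φ p) * du (ell φ 0 0) p
          - ell φ 0 0 p * du (fun q => conj (A1 φ q)) p) / ell φ 0 0 p := by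
        rw [e4, map_div₀, map_sub, map_add, map_mul, map_mul, conj_W_ell hφ,
          hduell, ell_real hφ p, hduA1c]
        simp only [map_neg, Complex.conj_I, neg_neg]
      have e1 : Lbj φ 0 f = (fun q => W 0 1 I f q + conj (A1 φ q) * du f q) := by
        funext q; show wzb1 f q + conj (A1 φ q) * du f q = _; rw [wzb1_eq]
      have e3 : Lbj φ 0 (Tof φ f) p
          = W 0 1 I (fun q => ell φ 0 0 q * du f q) p
            + conj (A1 φ p) * du (fun q => ell φ 0 0 q * du f q) p := by
        show wzb1 (Tof φ f) p + conj (A1 φ p) * du (Tof φ f) p = _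
        rw [wzb1_eq, hTof]
      show Tof φ (Lbj φ 0 f) p - Lbj φ 0 (Tof φ f) p = -(conj (Pj φ 0 p)) * Tof φ f p
      calc Tof φ (Lbj φ 0 f) p - Lbj φ 0 (Tof φ f) p
          = ell φ 0 0 p * du (fun q => W 0 1 I f q + conj (A1 φ q) * du f q) p
            - (W 0 1 I (fun q => ell φ 0 0 q * du f q) p
              + conj (A1 φ p) * du (fun q => ell φ 0 0 q * du f q) p) := by
            rw [show Tof φ (Lbj φ 0 f) p = ell φ 0 0 p * du (Lbj φ 0 f) p from rfl, e1, e3]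
        _ = -((W 0 1 I (ell φ 0 0) p + conj (A1 φ p) * du (ell φ 0 0) p
              - ell φ 0 0 p * du (fun q => conj (A1 φ q)) p) / ell φ 0 0 p)
            * (ell φ 0 0 p * du f p) :=
            abstract_bracket 0 1 I (fun q => conj (A1 φ q)) (ell φ 0 0) hA1cp hℓp (hℓ p) hf
        _ = -(conj (Pj φ 0 p)) * Tof φ f p := by rw [e4c]; rfl
  · -- j = 1
    have e4 : Pj φ 1 p = (W 2 3 (-I) (ell φ 0 0) p + A2 φ p * du (ell φ 0 0) p
        - ell φ 0 0 p * du (A2 φ) p) / ell φ 0 0 p := by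
      show (wz2 (ell φ 0 0) p + A2 φ p * du (ell φ 0 0) p
        - ell φ 0 0 p * du (A2 φ) p) / ell φ 0 0 p = _
      rw [wz2_eq]
    constructor
    · have e1 : Lj φ 1 f = (fun q => W 2 3 (-I) f q + A2 φ q * du f q) := by
        funext q; show wz2 f q + A2 φ q * du f q = _; rw [wz2_eq]
      have e3 : Lj φ 1 (Tof φ f) p
          = W 2 3 (-I) (fun q => ell φ 0 0 q * du f q) p
            + A2 φ p * du (fun q => ell φ 0 0 q * du f q) p := by
        show wz2 (Tof φ f) p + A2 φ p * du (Tof φ f) p = _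
        rw [wz2_eq, hTof]
      show Tof φ (Lj φ 1 f) p - Lj φ 1 (Tof φ f) p = -(Pj φ 1 p) * Tof φ f p
      calc Tof φ (Lj φ 1 f) p - Lj φ 1 (Tof φ f) p
          = ell φ 0 0 p * du (fun q => W 2 3 (-I) f q + A2 φ q * du f q) p
            - (W 2 3 (-I) (fun q => ell φ 0 0 q * du f q) p
              + A2 φ p * du (fun q => ell φ 0 0 q * du f q) p) := by
            rw [show Tof φ (Lj φ 1 f) p = ell φ 0 0 p * du (Lj φ 1 f) p from rfl, e1, e3]
        _ = -((W 2 3 (-I) (ell φ 0 0) p + A2 φ p * du (ell φ 0 0) p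
              - ell φ 0 0 p * du (A2 φ) p) / ell φ 0 0 p) * (ell φ 0 0 p * du f p) :=
            abstract_bracket 2 3 (-I) (A2 φ) (ell φ 0 0) hA2p hℓp (hℓ p) hf
        _ = -(Pj φ 1 p) * Tof φ f p := by rw [e4]; rfl
    · have e4c : conj (Pj φ 1 p) = (W 2 3 I (ell φ 0 0) p
          + conj (A2 φ p) * du (ell φ 0 0) p
          - ell φ 0 0 p * du (fun q => conj (A2 φ q)) p) / ell φ 0 0 p := by
        rw [e4, map_div₀, map_sub, map_add, map_mul, map_mul, conj_W_ell hφ,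
          hduell, ell_real hφ p, hduA2c]
        simp only [map_neg, Complex.conj_I, neg_neg]
      have e1 : Lbj φ 1 f = (fun q => W 2 3 I f q + conj (A2 φ q) * du f q) := by
        funext q; show wzb2 f q + conj (A2 φ q) * du f q = _; rw [wzb2_eq]
      have e3 : Lbj φ 1 (Tof φ f) p
          = W 2 3 I (fun q => ell φ 0 0 q * du f q) p
            + conj (A2 φ p) * du (fun q => ell φ 0 0 q * du f q) p := by
        show wzb2 (Tof φ f) p + conj (A2 φ p) * du (Tof φ f) p = _
        rw [wzb2_eq, hTof]
      show Tof φ (Lbj φ 1 f) p - Lbj φ 1 (Tof φ f) p = -(conj (Pj φ 1 p)) * Tof φ f p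
      calc Tof φ (Lbj φ 1 f) p - Lbj φ 1 (Tof φ f) p
          = ell φ 0 0 p * du (fun q => W 2 3 I f q + conj (A2 φ q) * du f q) p
            - (W 2 3 I (fun q => ell φ 0 0 q * du f q) p
              + conj (A2 φ p) * du (fun q => ell φ 0 0 q * du f q) p) := by
            rw [show Tof φ (Lbj φ 1 f) p = ell φ 0 0 p * du (Lbj φ 1 f) p from rfl, e1, e3]
        _ = -((W 2 3 I (ell φ 0 0) p + conj (A2 φ p) * du (ell φ 0 0) p
              - ell φ 0 0 p * du (fun q => conj (A2 φ q)) p) / ell φ 0 0 p)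
            * (ell φ 0 0 p * du f p) :=
            abstract_bracket 2 3 I (fun q => conj (A2 φ q)) (ell φ 0 0) hA2cp hℓp (hℓ p) hf
        _ = -(conj (Pj φ 1 p)) * Tof φ f p := by rw [e4c]; rfl


end
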